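/- The Takagi function is the unique continuous function f on [0,1] satisfying both f(x) = f(1−x) and f(x/2) = x/2 + f(x)/2 for all x in [0,1]. -/

import Mathlib

open scoped BigOperators

/-- Distance from a real number to the nearest integer. -/
noncomputable def nearestDist (t : ℝ) : ℝ := |t - round t|

/-- The Takagi function. -/
noncomputable def takagi (x : ℝ) : ℝ := ∑' n : ℕ, (1 / 2 ^ n) * nearestDist (2 ^ n * x)

/-- Partial Takagi function of level `n`. -/
noncomputable def takagiPartial (n : ℕ) (x : ℝ) : ℝ :=
  ∑ j ∈ Finset.range n, (1 / 2 ^ j) * nearestDist (2 ^ j * x)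

/-- The symmetric tent map. -/
noncomputable def tent (x : ℝ) : ℝ := if x ≤ 1 / 2 then 2 * x else 2 - 2 * x


lemma nd_nonneg (t : ℝ) : 0 ≤ nearestDist t := abs_nonneg _
lemma nd_le_half (t : ℝ) : nearestDist t ≤ 1 / 2 := abs_sub_round t

lemma nd_min (t : ℝ) (m : ℤ) : nearestDist t ≤ |t - m| := by
  rcases eq_or_ne m (round t) with rfl | h
  · exact le_refl _
  · have h1 : (1:ℝ) ≤ |(m : ℝ) - round t| := by
      rw [← Int.cast_sub, ← Int.cast_abs]
      exact_mod_cast Int.one_le_abs (sub_ne_zero.mpr h)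
    have h2 : |(m:ℝ) - round t| ≤ |t - m| + |t - round t| := by
      calc |(m:ℝ) - round t| = |(t - round t) - (t - m)| := by ring_nf
        _ ≤ |t - round t| + |t - m| := abs_sub _ _
        _ = |t - m| + |t - round t| := by ring
    have := nd_le_half t
    unfold nearestDist at *
    linarith
  
lemma nd_add_int (t : ℝ) (m : ℤ) : nearestDist (t + m) = nearestDist t := by
  unfold nearestDist
  rw [round_add_intCast, Int.cast_add]
  ring_nf

lemma nd_neg (t : ℝ) : nearestDist (-t) = nearestDist t := by
  have h1 : nearestDist (-t) ≤ nearestDist t := by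
    calc nearestDist (-t) ≤ |(-t) - (-(round t) : ℤ)| := nd_min _ _
      _ = nearestDist t := by rw [Int.cast_neg]; rw [show -t - -((round t:ℝ)) = -(t - round t) by ring, abs_neg]; rfl
  have h2 : nearestDist t ≤ nearestDist (-t) := by
    calc nearestDist t ≤ |t - (-(round (-t)) : ℤ)| := nd_min _ _
      _ = nearestDist (-t) := by rw [Int.cast_neg]; rw [show t - -((round (-t):ℝ)) = -(-t - round (-t)) by ring, abs_neg]; rfl
  linarith

lemma nd_lipschitz : LipschitzWith 1 nearestDist := by
  rw [lipschitzWith_iff_dist_le_mul]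
  intro a b
  simp only [Real.dist_eq, NNReal.coe_one, one_mul]
  rw [abs_sub_le_iff]
  constructor
  · have := nd_min a (round b)
    have : nearestDist a ≤ |a - b| + nearestDist b := by
      calc nearestDist a ≤ |a - round b| := nd_min a (round b)
        _ = |(a - b) + (b - round b)| := by ring_nf
        _ ≤ |a - b| + |b - round b| := abs_add_le _ _
    linarith [this]
  · have : nearestDist b ≤ |a - b| + nearestDist a := by
      calc nearestDist b ≤ |b - round a| := nd_min b (round a)
        _ = |(b - a) + (a - round a)| := by ring_nf
        _ ≤ |b - a| + |a - round a| := abs_add_le _ _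
        _ = |a - b| + nearestDist a := by rw [abs_sub_comm]; rfl
    linarith

lemma takagi_term_bound (x : ℝ) (n : ℕ) :
    (1 / 2 ^ n : ℝ) * nearestDist (2 ^ n * x) ≤ (1/2)^n := by
  calc (1 / 2 ^ n : ℝ) * nearestDist (2 ^ n * x) ≤ (1 / 2 ^ n) * (1/2) :=
        mul_le_mul_of_nonneg_left (nd_le_half _) (by positivity)
    _ ≤ (1/2)^n := by
        rw [div_pow, one_pow]
        have h2 : (0:ℝ) ≤ 1/2^n := by positivity
        linarith

lemma takagi_summable (x : ℝ) : Summable (fun n : ℕ => (1 / 2 ^ n : ℝ) * nearestDist (2 ^ n * x)) :=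
  Summable.of_nonneg_of_le (fun n => mul_nonneg (by positivity) (nd_nonneg _))
    (fun n => takagi_term_bound x n) summable_geometric_two

lemma takagi_continuous : Continuous takagi := by
  apply continuous_tsum (f := fun n x => (1 / 2 ^ n : ℝ) * nearestDist (2 ^ n * x))
    (u := fun n => (1/2:ℝ)^n)
  · intro i
    exact continuous_const.mul (nd_lipschitz.continuous.comp (continuous_const.mul continuous_id))
  · exact summable_geometric_two
  · intro n x
    rw [Real.norm_eq_abs, abs_mul, abs_of_nonneg (nd_nonneg _),
      abs_of_nonneg (by positivity : (0:ℝ) ≤ 1/2^n)]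
    exact takagi_term_bound x n

lemma takagi_symm (x : ℝ) : takagi x = takagi (1 - x) := by
  unfold takagi
  congr 1; funext n
  congr 1
  have h : (2:ℝ)^n * (1 - x) = -(2^n * x) + ((2^n : ℤ) : ℝ) := by push_cast; ring
  rw [h, nd_add_int, nd_neg]

lemma nd_of_mem (x : ℝ) (hx : x ∈ Set.Icc (0:ℝ) 1) : nearestDist (x/2) = x/2 := by
  obtain ⟨h0, h1⟩ := hx
  unfold nearestDist
  rcases lt_or_eq_of_le h1 with h | h
  · have hfl : ⌊(x+1)/2⌋ = 0 := by
      rw [Int.floor_eq_zero_iff, Set.mem_Ico]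
      exact ⟨by linarith, by linarith⟩
    rw [round_eq, show x/2 + 1/2 = (x+1)/2 by ring, hfl, Int.cast_zero, sub_zero,
      abs_of_nonneg (by linarith)]
  · subst h
    have hr : round ((1:ℝ)/2) = 1 := by rw [round_eq]; norm_num
    rw [hr]; norm_num

lemma takagi_half (x : ℝ) (hx : x ∈ Set.Icc (0:ℝ) 1) : takagi (x / 2) = x / 2 + takagi x / 2 := by
  unfold takagi
  rw [Summable.tsum_eq_zero_add (takagi_summable (x/2))]
  have h0 : (1 / 2 ^ (0:ℕ) : ℝ) * nearestDist (2 ^ (0:ℕ) * (x/2)) = x/2 := by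
    simpa using nd_of_mem x hx
  rw [h0]
  congr 1
  rw [← tsum_div_const]
  congr 1; funext n
  have h : (2:ℝ) ^ (n+1) * (x/2) = 2^n * x := by ring
  rw [h, pow_succ]
  ring

lemma takagi_unique (f : ℝ → ℝ) (hc : ContinuousOn f (Set.Icc (0:ℝ) 1))
    (hsym : ∀ x ∈ Set.Icc (0:ℝ) 1, f x = f (1 - x))
    (hh : ∀ x ∈ Set.Icc (0:ℝ) 1, f (x / 2) = x / 2 + f x / 2) :
    ∀ x ∈ Set.Icc (0:ℝ) 1, f x = takagi x := by
  set g : ℝ → ℝ := fun x => |f x - takagi x| with hg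
  have hgc : ContinuousOn g (Set.Icc (0:ℝ) 1) :=
    (hc.sub takagi_continuous.continuousOn).abs
  obtain ⟨x0, hx0, hmax⟩ := (isCompact_Icc (a := (0:ℝ)) (b := 1)).exists_isMaxOn
    (Set.nonempty_Icc.mpr zero_le_one) hgc
  -- key: g y = g (2y) / 2 for y ∈ [0, 1/2]
  have key : ∀ y : ℝ, y ∈ Set.Icc (0:ℝ) 1 → y ≤ 1/2 → g y = g (2*y) / 2 := by
    intro y hy hy2
    have h2y : 2*y ∈ Set.Icc (0:ℝ) 1 := ⟨by linarith [hy.1], by linarith⟩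
    have e1 := hh (2*y) h2y
    have e2 := takagi_half (2*y) h2y
    rw [show (2*y)/2 = y by ring] at e1 e2
    simp only [hg, e1, e2]
    rw [show y + f (2*y)/2 - (y + takagi (2*y)/2) = (f (2*y) - takagi (2*y))/2 by ring,
      abs_div]
    norm_num
  have hmax' : ∀ y ∈ Set.Icc (0:ℝ) 1, g y ≤ g x0 := fun y hy => hmax hy
  have hM : g x0 ≤ g x0 / 2 := by
    rcases le_or_gt x0 (1/2) with h | h
    · have h2 := hmax' (2*x0) ⟨by linarith [hx0.1], by linarith⟩
      calc g x0 = g (2*x0) / 2 := key x0 hx0 h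
        _ ≤ g x0 / 2 := by linarith
    · have h1x : (1 - x0) ∈ Set.Icc (0:ℝ) 1 := ⟨by linarith [hx0.2], by linarith [hx0.1]⟩
      have hgsym : g x0 = g (1 - x0) := by
        simp only [hg]
        rw [hsym x0 hx0, takagi_symm x0]
      have h2 := hmax' (2*(1-x0)) ⟨by linarith [hx0.2], by linarith⟩
      calc g x0 = g (1-x0) := hgsym
        _ = g (2*(1-x0)) / 2 := key (1-x0) h1x (by linarith)
        _ ≤ g x0 / 2 := by linarith
  intro x hx
  have := hmax' x hx
  have hgx0 : g x0 = 0 := by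
    have : (0:ℝ) ≤ g x0 := abs_nonneg _
    linarith
  have : g x = 0 := le_antisymm (by linarith) (abs_nonneg _)
  exact sub_eq_zero.mp (abs_eq_zero.mp this)

theorem takagi_unique_continuous :
    (ContinuousOn takagi (Set.Icc (0:ℝ) 1) ∧
      (∀ x ∈ Set.Icc (0:ℝ) 1, takagi x = takagi (1 - x)) ∧
      (∀ x ∈ Set.Icc (0:ℝ) 1, takagi (x / 2) = x / 2 + takagi x / 2)) ∧
    ∀ f : ℝ → ℝ, ContinuousOn f (Set.Icc (0:ℝ) 1) →
      (∀ x ∈ Set.Icc (0:ℝ) 1, f x = f (1 - x)) →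
      (∀ x ∈ Set.Icc (0:ℝ) 1, f (x / 2) = x / 2 + f x / 2) →
      ∀ x ∈ Set.Icc (0:ℝ) 1, f x = takagi x := by
  refine ⟨⟨takagi_continuous.continuousOn, fun x _ => takagi_symm x,
    fun x hx => takagi_half x hx⟩, takagi_unique⟩
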